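/- Let p ≥ 0 be an integer with ν | p−1 and set γ := (p−1)/ν ≥ 0. Then: (i) Coeff_{q^γ} Res_{w=0}( (1+w)^n / (w^{n−r−1} ∏_{k=1}^r(d_k w+1)) · (tilde𝔉 − tilde𝔉_p)/tilde𝔉 ) = Coeff_{q^γ} Res_{w=0}( (1+w)^n / (w^{n−r−1} ∏_{k=1}^r(d_k w+1)) · (𝔉 − 𝔉_p)/𝔉 ); and (ii) Coeff_{q^γ} Res_{w=0}( w^{r+1} / ∏_{k=1}^r(d_k w+1) · tilde𝔉_p/tilde𝔉 ) = 0. Here tilde𝔉 and 𝔉 are invertible as q-power series with ℚ((w))-coefficients since their q-constant terms equal 1, and the prefactors are expanded as Laurent series at w = 0 (∏_{k}(d_k w+1) has constant term 1). -/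

import Mathlib

/-- The Laurent-series variable `w`. -/
noncomputable def Zl : LaurentSeries ℚ := HahnSeries.single (1 : ℤ) (1 : ℚ)

/-- `Res_{w=0}`: in each q-coefficient take the coefficient of `w⁻¹`. -/
noncomputable def resH (f : PowerSeries (LaurentSeries ℚ)) : PowerSeries ℚ :=
  PowerSeries.mk fun β => (PowerSeries.coeff (R := LaurentSeries ℚ) β f).coeff (-1)

/-- The coefficients `c_{p,l}^{(β)}`. -/
noncomputable def ccoef (n r : ℕ) (d : Fin r → ℕ) (p β : ℕ) (l : ℤ) : ℚ :=
  if l < 0 then 0 else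
    PowerSeries.coeff (R := ℚ) l.toNat
      (((PowerSeries.X + (β : PowerSeries ℚ)) ^ p *
          ∏ k : Fin r, ∏ i ∈ Finset.range (d k * β),
            ((d k : PowerSeries ℚ) * PowerSeries.X + ((i + 1 : ℕ) : PowerSeries ℚ))) *
        (∏ j ∈ Finset.range β, (PowerSeries.X + ((j + 1 : ℕ) : PowerSeries ℚ)) ^ n)⁻¹)

/-- The operator `𝐃 = 1 + (q/w)·d/dq` on q-series with Laurent-series coefficients. -/
noncomputable def Dop (H : PowerSeries (LaurentSeries ℚ)) : PowerSeries (LaurentSeries ℚ) :=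
  PowerSeries.mk fun β =>
    (1 + HahnSeries.single (-1 : ℤ) ((β : ℕ) : ℚ)) * PowerSeries.coeff (R := LaurentSeries ℚ) β H

namespace Aux9

/-- order bound: all coefficients below `N` vanish -/
def bd (N : ℤ) (f : LaurentSeries ℚ) : Prop := ∀ l : ℤ, l < N → f.coeff l = 0

lemma bd_iff {N : ℤ} {f : LaurentSeries ℚ} :
    bd N f ↔ Valued.v f ≤ ((Multiplicative.ofAdd (-N)) : Multiplicative ℤ) := by
  exact (LaurentSeries.valuation_le_iff_coeff_lt_eq_zero (K := ℚ)).symm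

lemma bd_mono {N N' : ℤ} (h : N' ≤ N) {f} (hf : bd N f) : bd N' f :=
  fun l hl => hf l (lt_of_lt_of_le hl h)

lemma bd_zero (N : ℤ) : bd N (0 : LaurentSeries ℚ) := fun _ _ => rfl

lemma bd_add {N f g} (hf : bd N f) (hg : bd N g) : bd N (f + g) := by
  intro l hl; rw [HahnSeries.coeff_add, hf l hl, hg l hl, add_zero]

lemma bd_neg {N f} (hf : bd N f) : bd N (-f) := by
  intro l hl; rw [HahnSeries.coeff_neg, hf l hl, neg_zero]

lemma bd_sub {N f g} (hf : bd N f) (hg : bd N g) : bd N (f - g) := by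
  rw [sub_eq_add_neg]; exact bd_add hf (bd_neg hg)

lemma bd_sum {N : ℤ} {α : Type*} (s : Finset α) (f : α → LaurentSeries ℚ)
    (h : ∀ a ∈ s, bd N (f a)) : bd N (∑ a ∈ s, f a) := by
  classical
  induction s using Finset.induction with
  | empty => simpa using bd_zero N
  | insert _ _ hx ih =>
    rw [Finset.sum_insert hx]
    exact bd_add (h _ (Finset.mem_insert_self _ _))
      (ih fun a ha => h a (Finset.mem_insert_of_mem ha))

lemma bd_mul {a b : ℤ} {f g} (hf : bd a f) (hg : bd b g) : bd (a + b) (f * g) := by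
  rw [bd_iff] at hf hg ⊢
  calc Valued.v (f * g) = Valued.v f * Valued.v g := Valuation.map_mul _ _ _
  _ ≤ (Multiplicative.ofAdd (-a) : Multiplicative ℤ) * (Multiplicative.ofAdd (-b) : Multiplicative ℤ) :=
      mul_le_mul' hf hg
  _ = ((Multiplicative.ofAdd (-(a+b)) : Multiplicative ℤ) : WithZero (Multiplicative ℤ)) := by
      rw [← WithZero.coe_mul, ← ofAdd_add]; ring_nf

lemma bd_single (a : ℤ) (c : ℚ) : bd a (HahnSeries.single a c) := by
  intro l hl; exact HahnSeries.coeff_single_of_ne (ne_of_lt hl)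

lemma bd_one : bd 0 (1 : LaurentSeries ℚ) := by
  intro l hl
  rw [HahnSeries.coeff_one, if_neg (ne_of_lt hl)]

lemma bd_nat (c : ℕ) : bd 0 ((c : LaurentSeries ℚ)) := by
  induction c with
  | zero => simpa using bd_zero 0
  | succ k ih => push_cast; exact bd_add ih bd_one

lemma bd_prod {α : Type*} (s : Finset α) (f : α → LaurentSeries ℚ) (N : α → ℤ)
    (h : ∀ a ∈ s, bd (N a) (f a)) : bd (∑ a ∈ s, N a) (∏ a ∈ s, f a) := by
  classical
  induction s using Finset.induction with
  | empty => simpa using bd_one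
  | insert _ _ hx ih =>
    rw [Finset.prod_insert hx, Finset.sum_insert hx]
    exact bd_mul (h _ (Finset.mem_insert_self _ _))
      (ih fun a ha => h a (Finset.mem_insert_of_mem ha))

lemma bd_prod0 {α : Type*} (s : Finset α) (f : α → LaurentSeries ℚ)
    (h : ∀ a ∈ s, bd 0 (f a)) : bd 0 (∏ a ∈ s, f a) := by
  have := bd_prod s f (fun _ => 0) h
  simpa using this

lemma bd_pow {a : ℤ} {f} (hf : bd a f) (k : ℕ) : bd (k * a) (f ^ k) := by
  induction k with
  | zero => simpa using bd_one
  | succ j ih =>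
    have := bd_mul ih hf
    rw [pow_succ]
    have he : ((j:ℤ)+1) * a = (j:ℤ) * a + a := by ring
    rw [Nat.cast_succ, he]
    exact this

lemma bd_pow0 {f} (hf : bd 0 f) (k : ℕ) : bd 0 (f ^ k) := by
  simpa using bd_pow hf k

lemma bd_Zl : bd 1 Zl := bd_single 1 1

lemma bd_Zl_pow (k : ℕ) : bd k (Zl ^ k) := by
  simpa using bd_pow bd_Zl k

/-- valuation is exactly 1 for series with nonneg support and nonzero constant term -/
lemma vone {f : LaurentSeries ℚ} (h1 : bd 0 f) (h2 : f.coeff 0 ≠ 0) :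
    Valued.v f = 1 := by
  have hle : Valued.v f ≤ 1 := by
    have := bd_iff.mp h1; rwa [neg_zero, ofAdd_zero, WithZero.coe_one] at this
  rcases lt_or_eq_of_le hle with hlt | he
  · exfalso
    apply h2
    have : Valued.v f ≤ ((Multiplicative.ofAdd (-1 : ℤ)) : Multiplicative ℤ) := by
      rcases eq_or_ne (Valued.v f) 0 with h0 | h0
      · rw [h0]; exact zero_le'
      · obtain ⟨u, hu⟩ := WithZero.ne_zero_iff_exists.mp h0
        rw [← hu] at hlt ⊢
        rw [WithZero.coe_le_coe]
        rw [← WithZero.coe_one, WithZero.coe_lt_coe] at hlt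
        have h' : Multiplicative.toAdd u < 0 := by exact hlt
        have : Multiplicative.toAdd u ≤ -1 := by omega
        exact this
    exact (LaurentSeries.valuation_le_iff_coeff_lt_eq_zero ℚ).mp this 0 (by norm_num)
  · exact he

lemma vone_ne_zero {f : LaurentSeries ℚ} (h : Valued.v f = 1) : f ≠ 0 := by
  intro h0
  rw [h0, map_zero] at h
  exact zero_ne_one h

lemma vone_mul {f g : LaurentSeries ℚ} (hf : Valued.v f = 1) (hg : Valued.v g = 1) :
    Valued.v (f * g) = 1 := by
  rw [Valuation.map_mul, hf, hg, one_mul]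

lemma vone_prod {α : Type*} (s : Finset α) (f : α → LaurentSeries ℚ)
    (h : ∀ a ∈ s, Valued.v (f a) = 1) : Valued.v (∏ a ∈ s, f a) = 1 := by
  classical
  induction s using Finset.induction with
  | empty => simpa using Valued.v.map_one
  | insert _ _ hx ih =>
    rw [Finset.prod_insert hx]
    exact vone_mul (h _ (Finset.mem_insert_self _ _))
      (ih fun a ha => h a (Finset.mem_insert_of_mem ha))

lemma bd_div1 {a : ℤ} {f g : LaurentSeries ℚ} (hf : bd a f) (hg : Valued.v g = 1) :
    bd a (f / g) := by
  rw [bd_iff] at hf ⊢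
  rw [map_div₀, hg, div_one]
  exact hf

lemma v_Zl_pow (k : ℕ) :
    Valued.v (Zl ^ k) = ((Multiplicative.ofAdd (-(k:ℤ))) : Multiplicative ℤ) := by
  rw [Zl, map_pow, LaurentSeries.valuation_single_zpow, ← WithZero.exp_nsmul]
  show WithZero.exp _ = WithZero.exp _
  congr 1
  simp

lemma bd_div2 {a : ℤ} {f u : LaurentSeries ℚ} (hf : bd a f) (hu : Valued.v u = 1) (k : ℕ) :
    bd (a - k) (f / (Zl ^ k * u)) := by
  rw [bd_iff] at hf ⊢
  rw [map_div₀, Valuation.map_mul, v_Zl_pow, hu, mul_one, div_eq_mul_inv, ← WithZero.coe_inv]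
  calc Valued.v f * (((Multiplicative.ofAdd (-(k:ℤ)))⁻¹ : Multiplicative ℤ) : WithZero (Multiplicative ℤ))
      ≤ ((Multiplicative.ofAdd (-a)) : Multiplicative ℤ) *
         (((Multiplicative.ofAdd (-(k:ℤ)))⁻¹ : Multiplicative ℤ) : WithZero (Multiplicative ℤ)) :=
        mul_le_mul_left hf _
  _ = ((Multiplicative.ofAdd (-(a - k))) : Multiplicative ℤ) := by
        rw [← WithZero.coe_mul, WithZero.coe_inj, ← ofAdd_neg, ← ofAdd_add]
        congr 1
        ring

lemma coeff0_mul {f g : LaurentSeries ℚ} (hf : bd 0 f) (hg : bd 0 g) :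
    (f * g).coeff 0 = f.coeff 0 * g.coeff 0 := by
  rw [HahnSeries.coeff_mul]
  apply Finset.sum_eq_single ((0 : ℤ), (0 : ℤ))
  · intro p hp hne
    rw [Finset.mem_addAntidiagonal] at hp
    obtain ⟨h1, h2, h3⟩ := hp
    rcases lt_trichotomy p.1 0 with h | h | h
    · rw [hf _ h, zero_mul]
    · have h2' : p.2 = 0 := by omega
      exact absurd (Prod.ext h h2') hne
    · have : p.2 < 0 := by omega
      rw [hg _ this, mul_zero]
  · intro hnot
    rw [Finset.mem_addAntidiagonal] at hnot
    push_neg at hnot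
    by_cases h0 : (0:ℤ) ∈ f.support
    · by_cases h1 : (0:ℤ) ∈ g.support
      · exact absurd (add_zero 0) (hnot h0 h1)
      · rw [HahnSeries.mem_support, not_not] at h1; rw [h1, mul_zero]
    · rw [HahnSeries.mem_support, not_not] at h0; rw [h0, zero_mul]

lemma coeff0_pow {f : LaurentSeries ℚ} (hf : bd 0 f) (k : ℕ) :
    (f ^ k).coeff 0 = f.coeff 0 ^ k := by
  induction k with
  | zero => simp [HahnSeries.coeff_one]
  | succ j ih => rw [pow_succ, coeff0_mul (bd_pow0 hf j) hf, ih, pow_succ]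

lemma coeff0_nat (c : ℕ) : ((c : LaurentSeries ℚ)).coeff 0 = c := by
  induction c with
  | zero => simp
  | succ j ih =>
    push_cast
    rw [HahnSeries.coeff_add, ih, HahnSeries.coeff_one, if_pos rfl]

lemma coeff0_Zl_pow {k : ℕ} (hk : 1 ≤ k) : (Zl ^ k).coeff 0 = 0 :=
  bd_Zl_pow k 0 (by exact_mod_cast hk)

/-- the factor `(Zl + c)^n - Zl^n` has valuation 1 -/
lemma v_fac2 (c n : ℕ) (hc : 1 ≤ c) (hn : 1 ≤ n) :
    Valued.v ((Zl + (c : LaurentSeries ℚ)) ^ n - Zl ^ n) = 1 := by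
  have hb : bd 0 (Zl + (c : LaurentSeries ℚ)) := bd_add (bd_mono (by norm_num) bd_Zl) (bd_nat c)
  apply vone
  · exact bd_sub (bd_pow0 hb n) (bd_mono (by positivity) (bd_Zl_pow n))
  · rw [HahnSeries.coeff_sub, coeff0_pow hb, coeff0_Zl_pow hn, sub_zero,
      HahnSeries.coeff_add, coeff0_nat]
    have : Zl.coeff 0 = 0 := bd_Zl 0 (by norm_num)
    rw [this, zero_add]
    positivity

lemma v_fac2' (c n : ℕ) (hc : 1 ≤ c) :
    Valued.v ((Zl + (c : LaurentSeries ℚ)) ^ n) = 1 := by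
  have hb : bd 0 (Zl + (c : LaurentSeries ℚ)) := bd_add (bd_mono (by norm_num) bd_Zl) (bd_nat c)
  apply vone
  · exact bd_pow0 hb n
  · rw [coeff0_pow hb, HahnSeries.coeff_add, coeff0_nat]
    have : Zl.coeff 0 = 0 := bd_Zl 0 (by norm_num)
    rw [this, zero_add]
    positivity

lemma v_fac3 (c : ℕ) : Valued.v ((c : LaurentSeries ℚ) * Zl + 1) = 1 := by
  apply vone
  · exact bd_add (bd_mono (by norm_num) (bd_mul (bd_nat c) bd_Zl)) bd_one
  · have h1 : ((c : LaurentSeries ℚ) * Zl).coeff 0 = 0 := by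
      have : bd 1 ((c : LaurentSeries ℚ) * Zl) := by
        simpa using bd_mul (bd_nat c) bd_Zl
      exact this 0 (by norm_num)
    rw [HahnSeries.coeff_add, h1, HahnSeries.coeff_one, if_pos rfl, zero_add]
    norm_num

lemma bd_fac1 (c i : ℕ) : bd 0 ((c : LaurentSeries ℚ) * Zl + ((i : ℕ) : LaurentSeries ℚ)) :=
  bd_add (bd_mono (by norm_num) (bd_mul (bd_nat c) bd_Zl)) (bd_nat i)

lemma bd_prod_sub {α : Type*} (n : ℤ) (hn : 0 ≤ n) (s : Finset α) (A B : α → LaurentSeries ℚ)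
    (hA : ∀ a ∈ s, bd 0 (A a)) (hB : ∀ a ∈ s, bd 0 (B a))
    (hAB : ∀ a ∈ s, bd n (A a - B a)) :
    bd n (∏ a ∈ s, A a - ∏ a ∈ s, B a) := by
  classical
  induction s using Finset.induction with
  | empty => simpa using bd_zero n
  | insert x s hx ih =>
    rw [Finset.prod_insert hx, Finset.prod_insert hx]
    have key : A x * ∏ a ∈ s, A a - B x * ∏ a ∈ s, B a
        = A x * (∏ a ∈ s, A a - ∏ a ∈ s, B a) + (A x - B x) * ∏ a ∈ s, B a := by ring
    rw [key]
    apply bd_add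
    · have := bd_mul (hA x (Finset.mem_insert_self _ _))
        (ih (fun a ha => hA a (Finset.mem_insert_of_mem ha))
            (fun a ha => hB a (Finset.mem_insert_of_mem ha))
            (fun a ha => hAB a (Finset.mem_insert_of_mem ha)))
      simpa using this
    · have := bd_mul (hAB x (Finset.mem_insert_self _ _))
        (bd_prod0 s B (fun a ha => hB a (Finset.mem_insert_of_mem ha)))
      simpa using this

lemma bd_div_sub {aN nN : ℤ} {a x y : LaurentSeries ℚ} (ha : bd aN a)
    (hx : Valued.v x = 1) (hy : Valued.v y = 1) (hyx : bd nN (y - x)) :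
    bd (aN + nN) (a / x - a / y) := by
  have hx0 := vone_ne_zero hx
  have hy0 := vone_ne_zero hy
  rw [div_sub_div a a hx0 hy0, mul_comm x a, ← mul_sub]
  exact bd_div1 (bd_mul ha hyx) (vone_mul hx hy)

end Aux9

namespace Aux9

open PowerSeries

/-- coefficientwise order bound with slope ν -/
def PB (ν : ℕ) (e : ℤ) (H : PowerSeries (LaurentSeries ℚ)) : Prop :=
  ∀ b : ℕ, bd ((ν : ℤ) * b + e) (PowerSeries.coeff (R := LaurentSeries ℚ) b H)

lemma PB_mono {ν : ℕ} {e e' : ℤ} (h : e' ≤ e) {H} (hH : PB ν e H) : PB ν e' H :=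
  fun b => bd_mono (by omega) (hH b)

lemma PB_add {ν : ℕ} {e : ℤ} {H K} (hH : PB ν e H) (hK : PB ν e K) : PB ν e (H + K) := by
  intro b
  rw [map_add]
  exact bd_add (hH b) (hK b)

lemma PB_neg {ν : ℕ} {e : ℤ} {H} (hH : PB ν e H) : PB ν e (-H) := by
  intro b
  rw [map_neg]
  exact bd_neg (hH b)

lemma PB_sub {ν : ℕ} {e : ℤ} {H K} (hH : PB ν e H) (hK : PB ν e K) : PB ν e (H - K) := by
  rw [sub_eq_add_neg]; exact PB_add hH (PB_neg hK)

lemma PB_sum {ν : ℕ} {e : ℤ} {α : Type*} (s : Finset α) (f : α → PowerSeries (LaurentSeries ℚ))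
    (h : ∀ a ∈ s, PB ν e (f a)) : PB ν e (∑ a ∈ s, f a) := by
  intro b
  rw [map_sum]
  exact bd_sum _ _ fun a ha => h a ha b

lemma PB_mul {ν : ℕ} {e₁ e₂ : ℤ} {H K} (hH : PB ν e₁ H) (hK : PB ν e₂ K) :
    PB ν (e₁ + e₂) (H * K) := by
  intro b
  rw [PowerSeries.coeff_mul]
  apply bd_sum
  intro x hx
  rw [Finset.HasAntidiagonal.mem_antidiagonal] at hx
  have hx' : ((x.1 : ℤ) + x.2 : ℤ) = b := by exact_mod_cast congrArg (Nat.cast : ℕ → ℤ) hx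
  have he : (ν:ℤ) * b + (e₁ + e₂) = ((ν:ℤ) * x.1 + e₁) + ((ν:ℤ) * x.2 + e₂) := by
    rw [← hx']; ring
  rw [he]
  exact bd_mul (hH x.1) (hK x.2)

lemma PB_inv {ν : ℕ} {H} (hc : PowerSeries.constantCoeff (R := LaurentSeries ℚ) H = 1)
    (hH : PB ν 0 H) : PB ν 0 H⁻¹ := by
  intro b
  induction b using Nat.strong_induction_on with
  | _ b ih =>
    rw [PowerSeries.coeff_inv, hc]
    split
    · next h =>
      subst h
      simpa using bd_one
    · next h =>
      have h0 : bd 0 (-(1 : LaurentSeries ℚ)⁻¹) := by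
        rw [inv_one]; exact bd_neg bd_one
      have hsum : bd ((ν:ℤ) * b + 0) (∑ x ∈ Finset.HasAntidiagonal.antidiagonal b,
          if x.2 < b then PowerSeries.coeff (R := LaurentSeries ℚ) x.1 H
            * PowerSeries.coeff (R := LaurentSeries ℚ) x.2 H⁻¹ else 0) := by
        apply bd_sum
        intro x hx
        rw [Finset.HasAntidiagonal.mem_antidiagonal] at hx
        split
        · next hlt =>
          have hx' : ((x.1 : ℤ) + x.2 : ℤ) = b := by exact_mod_cast congrArg (Nat.cast : ℕ → ℤ) hx
          have he : (ν:ℤ) * b + 0 = ((ν:ℤ) * x.1 + 0) + ((ν:ℤ) * x.2 + 0) := by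
            rw [← hx']; ring
          rw [he]
          exact bd_mul (hH x.1) (ih x.2 hlt)
        · exact bd_zero _
      have := bd_mul h0 hsum
      rw [zero_add] at this
      exact this

lemma coeff_Dop_iter (H : PowerSeries (LaurentSeries ℚ)) (l b : ℕ) :
    PowerSeries.coeff (R := LaurentSeries ℚ) b (Dop^[l] H)
      = (1 + HahnSeries.single (-1 : ℤ) ((b : ℕ) : ℚ)) ^ l
          * PowerSeries.coeff (R := LaurentSeries ℚ) b H := by
  induction l with
  | zero => simp
  | succ j ih =>
    rw [Function.iterate_succ_apply', Dop, PowerSeries.coeff_mk, ih, pow_succ]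
    ring

lemma bd_Dfac (b : ℕ) (l : ℕ) :
    bd (-(l:ℤ)) ((1 + HahnSeries.single (-1 : ℤ) ((b : ℕ) : ℚ)) ^ l) := by
  have h1 : bd (-1) (1 + HahnSeries.single (-1 : ℤ) ((b : ℕ) : ℚ)) :=
    bd_add (bd_mono (by norm_num) bd_one) (bd_single _ _)
  have := bd_pow h1 l
  simpa using this

lemma PB_Dop_iter {ν : ℕ} {e : ℤ} {H} (hH : PB ν e H) (l : ℕ) :
    PB ν (e - l) (Dop^[l] H) := by
  intro b
  rw [coeff_Dop_iter]
  have := bd_mul (bd_Dfac b l) (hH b)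
  apply bd_mono _ this
  omega

lemma PB_CXpow {ν : ℕ} (e : ℤ) (s : ℚ) (β : ℕ) :
    PB ν (e - (ν:ℤ) * β) (PowerSeries.C (R := LaurentSeries ℚ) (HahnSeries.single e s)
      * PowerSeries.X ^ β) := by
  intro b
  rw [PowerSeries.coeff_C_mul_X_pow]
  split
  · next h =>
    subst h
    exact bd_mono (by omega) (bd_single e s)
  · exact bd_zero _

end Aux9

open Aux9 in
theorem stmt9 (n r : ℕ) (hr : 1 ≤ r) (d : Fin r → ℕ) (hd : ∀ k, 2 ≤ d k)
    (m D : ℕ) (hm : m = ∑ k, d k) (hD : D = ∏ k, d k ^ d k)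
    (ν : ℕ) (hν : ν = n - m) (hmn : m < n)
    -- the coefficients c̃_{p,l}^{(β)}
    (ct : ℕ → ℤ → ℕ → ℚ)
    (hct0 : ∀ (p : ℕ) (l : ℤ), ct p l 0 = if l = (p : ℤ) then 1 else 0)
    (hctz : ∀ (p : ℕ) (l : ℤ) (β : ℕ),
      (l < 0 ∨ (p : ℤ) - (ν : ℤ) * (β : ℤ) < l) → ct p l β = 0)
    (hctrec : ∀ (p : ℕ) (l : ℤ) (β : ℕ), 1 ≤ β → 0 ≤ l → l ≤ (p : ℤ) - (ν : ℤ) * (β : ℤ) →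
      ct p l β = -∑ β₁ ∈ Finset.range β, ∑ k ∈ Finset.Icc (0 : ℤ) ((p : ℤ) - (ν : ℤ) * (β₁ : ℤ)),
        ct p k β₁ * ccoef n r d k.toNat (β - β₁) l)
    -- the series tilde𝔉(w,q) and 𝔉(w,q)
    (tF F : PowerSeries (LaurentSeries ℚ))
    (htF : ∀ β : ℕ, PowerSeries.coeff (R := LaurentSeries ℚ) β tF =
      Zl ^ (ν * β) *
        (∏ k : Fin r, ∏ i ∈ Finset.range (d k * β),
          ((d k : LaurentSeries ℚ) * Zl + ((i + 1 : ℕ) : LaurentSeries ℚ))) /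
        ∏ j ∈ Finset.range β, ((Zl + ((j + 1 : ℕ) : LaurentSeries ℚ)) ^ n - Zl ^ n))
    (hF : ∀ β : ℕ, PowerSeries.coeff (R := LaurentSeries ℚ) β F =
      Zl ^ (ν * β) *
        (∏ k : Fin r, ∏ i ∈ Finset.range (d k * β),
          ((d k : LaurentSeries ℚ) * Zl + ((i + 1 : ℕ) : LaurentSeries ℚ))) /
        ∏ j ∈ Finset.range β, (Zl + ((j + 1 : ℕ) : LaurentSeries ℚ)) ^ n)
    (p γ : ℕ) (hp : p = 1 + ν * γ)
    -- tilde𝔉_p(w,q) and 𝔉_p(w,q)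
    (tFp Fp : PowerSeries (LaurentSeries ℚ))
    (htFp : tFp =
      ∑ β ∈ Finset.range (p / ν + 1), ∑ l ∈ Finset.range (p - ν * β + 1),
        PowerSeries.C (R := LaurentSeries ℚ)
            (HahnSeries.single (-((p : ℤ) - (ν : ℤ) * (β : ℤ) - (l : ℤ))) (ct p (l : ℤ) β)) *
          PowerSeries.X ^ β * Dop^[l] tF)
    (hFp : Fp =
      ∑ β ∈ Finset.range (p / ν + 1), ∑ l ∈ Finset.range (p - ν * β + 1),
        PowerSeries.C (R := LaurentSeries ℚ)
            (HahnSeries.single (-((p : ℤ) - (ν : ℤ) * (β : ℤ) - (l : ℤ))) (ct p (l : ℤ) β)) *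
          PowerSeries.X ^ β * Dop^[l] F) :
    -- (i)
    PowerSeries.coeff (R := ℚ) γ (resH (PowerSeries.C (R := LaurentSeries ℚ)
        ((1 + Zl) ^ n / (Zl ^ (n - r - 1) * ∏ k : Fin r, ((d k : LaurentSeries ℚ) * Zl + 1))) *
        ((tF - tFp) * tF⁻¹)))
      = PowerSeries.coeff (R := ℚ) γ (resH (PowerSeries.C (R := LaurentSeries ℚ)
        ((1 + Zl) ^ n / (Zl ^ (n - r - 1) * ∏ k : Fin r, ((d k : LaurentSeries ℚ) * Zl + 1))) *
        ((F - Fp) * F⁻¹)))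
    ∧
    -- (ii)
    PowerSeries.coeff (R := ℚ) γ (resH (PowerSeries.C (R := LaurentSeries ℚ)
        (Zl ^ (r + 1) / ∏ k : Fin r, ((d k : LaurentSeries ℚ) * Zl + 1)) *
        (tFp * tF⁻¹)))
      = 0 := by
  -- numeric preliminaries
  have h2r : 2 * r ≤ m := by
    rw [hm]
    calc 2 * r = ∑ _k : Fin r, 2 := by
          simp [Finset.sum_const, Finset.card_univ, mul_comm]
    _ ≤ ∑ k, d k := Finset.sum_le_sum (fun k _ => hd k)
  have hn1 : 1 ≤ n := by omega
  have hn2r : 2 * r + 1 ≤ n := by omega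
  have hpz : (p : ℤ) = 1 + (ν : ℤ) * (γ : ℤ) := by
    rw [hp]; push_cast; ring
  -- the common numerator has nonnegative order
  have hnum : ∀ b : ℕ, bd 0 (∏ k : Fin r, ∏ i ∈ Finset.range (d k * b),
      ((d k : LaurentSeries ℚ) * Zl + ((i + 1 : ℕ) : LaurentSeries ℚ))) := by
    intro b
    apply bd_prod0
    intro k _
    apply bd_prod0
    intro i _
    exact bd_fac1 (d k) (i + 1)
  have hz : ∀ b : ℕ, bd ((ν : ℤ) * b) (Zl ^ (ν * b)) := by
    intro b
    have := bd_Zl_pow (ν * b)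
    rwa [Nat.cast_mul] at this
  have hdent : ∀ b : ℕ, Valued.v (∏ j ∈ Finset.range b,
      ((Zl + ((j + 1 : ℕ) : LaurentSeries ℚ)) ^ n - Zl ^ n)) = 1 := by
    intro b
    apply vone_prod
    intro j _
    exact v_fac2 (j + 1) n (by omega) hn1
  have hden : ∀ b : ℕ, Valued.v (∏ j ∈ Finset.range b,
      (Zl + ((j + 1 : ℕ) : LaurentSeries ℚ)) ^ n) = 1 := by
    intro b
    apply vone_prod
    intro j _
    exact v_fac2' (j + 1) n (by omega)
  -- PB bounds for tF and F
  have h_tF_bd : PB ν 0 tF := by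
    intro b
    rw [htF b]
    have := bd_div1 (bd_mul (hz b) (hnum b)) (hdent b)
    exact this
  have h_F_bd : PB ν 0 F := by
    intro b
    rw [hF b]
    exact bd_div1 (bd_mul (hz b) (hnum b)) (hden b)
  -- constant coefficients are 1
  have hc_tF : PowerSeries.constantCoeff (R := LaurentSeries ℚ) tF = 1 := by
    have h0 := htF 0
    rw [PowerSeries.coeff_zero_eq_constantCoeff] at h0
    rw [h0]
    simp
  have hc_F : PowerSeries.constantCoeff (R := LaurentSeries ℚ) F = 1 := by
    have h0 := hF 0
    rw [PowerSeries.coeff_zero_eq_constantCoeff] at h0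
    rw [h0]
    simp
  have htFu : tF * tF⁻¹ = 1 :=
    PowerSeries.mul_inv_cancel tF (by rw [hc_tF]; exact one_ne_zero)
  have hFu : F * F⁻¹ = 1 :=
    PowerSeries.mul_inv_cancel F (by rw [hc_F]; exact one_ne_zero)
  have hinv_tF : PB ν 0 tF⁻¹ := PB_inv hc_tF h_tF_bd
  have hinv_F : PB ν 0 F⁻¹ := PB_inv hc_F h_F_bd
  -- tF - F has coefficients of order ≥ νβ + n
  have h_sub : PB ν (n : ℤ) (tF - F) := by
    intro b
    rw [map_sub, htF b, hF b]
    have hyx : bd (n : ℤ) ((∏ j ∈ Finset.range b, (Zl + ((j + 1 : ℕ) : LaurentSeries ℚ)) ^ n)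
        - ∏ j ∈ Finset.range b, ((Zl + ((j + 1 : ℕ) : LaurentSeries ℚ)) ^ n - Zl ^ n)) := by
      apply bd_prod_sub (n : ℤ) (by positivity)
      · intro j _
        exact bd_pow0 (bd_add (bd_mono (by norm_num) bd_Zl) (bd_nat (j + 1))) n
      · intro j _
        exact bd_sub (bd_pow0 (bd_add (bd_mono (by norm_num) bd_Zl) (bd_nat (j + 1))) n)
          (bd_mono (by positivity) (bd_Zl_pow n))
      · intro j _
        rw [sub_sub_cancel]
        exact bd_Zl_pow n
    exact bd_div_sub (bd_mul (hz b) (hnum b)) (hdent b) (hden b) hyx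
  -- tF⁻¹ - F⁻¹ has coefficients of order ≥ νβ + n
  have h_inv_sub : PB ν (n : ℤ) (tF⁻¹ - F⁻¹) := by
    have hkey : tF⁻¹ - F⁻¹ = tF⁻¹ * ((F - tF) * F⁻¹) := by
      linear_combination F⁻¹ * htFu - tF⁻¹ * hFu
    rw [hkey]
    have h1 : PB ν ((n : ℤ) + 0) ((F - tF) * F⁻¹) :=
      PB_mul (by
        have : F - tF = -(tF - F) := by ring
        rw [this]
        exact PB_neg h_sub) hinv_F
    have h2 := PB_mul hinv_tF h1
    rw [zero_add] at h2
    rw [add_zero] at h2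
    exact h2
  -- PB bound for tFp (and Fp)
  have h_tFp : PB ν (-(p : ℤ)) tFp := by
    rw [htFp]
    apply PB_sum
    intro β _
    apply PB_sum
    intro l _
    have hPB := PB_mul (PB_CXpow (-((p : ℤ) - (ν : ℤ) * (β : ℤ) - (l : ℤ))) (ct p (l : ℤ) β) β)
      (PB_Dop_iter h_tF_bd l)
    exact PB_mono (le_of_eq (by ring)) hPB
  -- PB bound for tFp - Fp
  have h_sub_p : PB ν ((n : ℤ) - p) (tFp - Fp) := by
    rw [htFp, hFp, ← Finset.sum_sub_distrib]
    apply PB_sum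
    intro β _
    rw [← Finset.sum_sub_distrib]
    apply PB_sum
    intro l _
    have hterm : PowerSeries.C (R := LaurentSeries ℚ)
            (HahnSeries.single (-((p : ℤ) - (ν : ℤ) * (β : ℤ) - (l : ℤ))) (ct p (l : ℤ) β)) *
          PowerSeries.X ^ β * Dop^[l] tF
        - PowerSeries.C (R := LaurentSeries ℚ)
            (HahnSeries.single (-((p : ℤ) - (ν : ℤ) * (β : ℤ) - (l : ℤ))) (ct p (l : ℤ) β)) *
          PowerSeries.X ^ β * Dop^[l] F
        = (PowerSeries.C (R := LaurentSeries ℚ)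
            (HahnSeries.single (-((p : ℤ) - (ν : ℤ) * (β : ℤ) - (l : ℤ))) (ct p (l : ℤ) β)) *
          PowerSeries.X ^ β) * (Dop^[l] tF - Dop^[l] F) := by ring
    rw [hterm]
    have hD : PB ν ((n : ℤ) - l) (Dop^[l] tF - Dop^[l] F) := by
      intro b
      rw [map_sub, coeff_Dop_iter, coeff_Dop_iter, ← mul_sub]
      have hb := bd_mul (bd_Dfac b l) (by
        have := h_sub b
        rwa [map_sub] at this)
      exact bd_mono (le_of_eq (by ring)) hb
    have hPB := PB_mul (PB_CXpow (-((p : ℤ) - (ν : ℤ) * (β : ℤ) - (l : ℤ))) (ct p (l : ℤ) β) β) hD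
    exact PB_mono (le_of_eq (by ring)) hPB
  -- the main difference estimate
  have hdiff : PB ν ((n : ℤ) - p) (Fp * F⁻¹ - tFp * tF⁻¹) := by
    have hsplit : Fp * F⁻¹ - tFp * tF⁻¹
        = (-(tFp - Fp)) * F⁻¹ + tFp * (-(tF⁻¹ - F⁻¹)) := by ring
    rw [hsplit]
    apply PB_add
    · have := PB_mul (PB_neg h_sub_p) hinv_F
      rwa [add_zero] at this
    · have := PB_mul h_tFp (PB_neg h_inv_sub)
      exact PB_mono (le_of_eq (by ring)) this
  -- valuation facts for the prefactors
  have hvfac3 : Valued.v (∏ k : Fin r, ((d k : LaurentSeries ℚ) * Zl + 1)) = 1 :=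
    vone_prod _ _ (fun k _ => v_fac3 (d k))
  have hpref1 : bd (0 - ((n - r - 1 : ℕ) : ℤ)) ((1 + Zl) ^ n /
      (Zl ^ (n - r - 1) * ∏ k : Fin r, ((d k : LaurentSeries ℚ) * Zl + 1))) :=
    bd_div2 (bd_pow0 (bd_add bd_one (bd_mono (by norm_num) bd_Zl)) n) hvfac3 (n - r - 1)
  have hpref2 : bd ((r : ℤ) + 1) (Zl ^ (r + 1) /
      ∏ k : Fin r, ((d k : LaurentSeries ℚ) * Zl + 1)) := by
    apply bd_div1 _ hvfac3
    have := bd_Zl_pow (r + 1)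
    rwa [Nat.cast_add, Nat.cast_one] at this
  have hcast : ((n - r - 1 : ℕ) : ℤ) = (n : ℤ) - r - 1 := by omega
  have hrz : (1 : ℤ) ≤ (r : ℤ) := by exact_mod_cast hr
  constructor
  · -- part (i)
    rw [← sub_eq_zero]
    simp only [resH, PowerSeries.coeff_mk, PowerSeries.coeff_C_mul]
    rw [← HahnSeries.coeff_sub, ← mul_sub, ← map_sub]
    have hps : (tF - tFp) * tF⁻¹ - (F - Fp) * F⁻¹ = Fp * F⁻¹ - tFp * tF⁻¹ := by
      linear_combination htFu - hFu
    rw [hps]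
    apply bd_mul hpref1 (hdiff γ) (-1)
    rw [hpz, hcast]
    have : (ν : ℤ) * (γ : ℤ) + ((n : ℤ) - (1 + (ν : ℤ) * (γ : ℤ))) = (n : ℤ) - 1 := by ring
    rw [this]
    have hn' : (2 * r + 1 : ℤ) ≤ (n : ℤ) := by exact_mod_cast hn2r
    linarith
  · -- part (ii)
    simp only [resH, PowerSeries.coeff_mk, PowerSeries.coeff_C_mul]
    have hprod := PB_mul h_tFp hinv_tF γ
    rw [add_zero] at hprod
    apply bd_mul hpref2 hprod (-1)
    rw [hpz]
    have : (ν : ℤ) * (γ : ℤ) + -(1 + (ν : ℤ) * (γ : ℤ)) = -1 := by ring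
    rw [this]
    linarith
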